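/- Let G be a finite simple graph that is d-regular with d ≥ 1, and let x, v, y be distinct vertices with {x,v} an edge of G and {x,y} not an edge of G. Let G' be obtained from G by deleting the edge {x,v} and adding the edge {x,y}. Then the number of wedges strictly increases: N_p(G') = N_p(G) + 1. -/

import Mathlib

open SimpleGraph

/-- The number of wedges (paths of length two) of a graph:
`N_p(H) = Σ_{u ∈ V} C(deg_H(u), 2)`. -/
noncomputable def wedgeCount {V : Type*} [Fintype V] (G : SimpleGraph V) : ℕ :=
  ∑ u : V, ((G.neighborSet u).ncard).choose 2

/-- The graph obtained from `G` by deleting the edge `{x,v}` and adding the edge `{x,y}`. -/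
def rewire {V : Type*} (G : SimpleGraph V) (x v y : V) : SimpleGraph V :=
  G.deleteEdges {s(x, v)} ⊔ SimpleGraph.fromEdgeSet {s(x, y)}

/-- if `G` is `d`-regular with `d ≥ 1`, then rewiring the edge `{x,v}` to
the non-edge `{x,y}` increases the number of wedges by exactly one. -/
theorem wedgeCount_rewire_regular {V : Type*} [Fintype V] (G : SimpleGraph V) (d : ℕ)
    (hd : 1 ≤ d) (hreg : ∀ u : V, (G.neighborSet u).ncard = d)
    (x v y : V) (hxv : x ≠ v) (hxy : x ≠ y) (hvy : v ≠ y)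
    (hadj : G.Adj x v) (hnadj : ¬ G.Adj x y) :
    wedgeCount (rewire G x v y) = wedgeCount G + 1 := by
  classical
  set G' := rewire G x v y with hG'
  have hvx : v ≠ x := hxv.symm
  have hyx : y ≠ x := hxy.symm
  have hyv : y ≠ v := hvy.symm
  -- neighbor sets
  have hNv : G'.neighborSet v = G.neighborSet v \ {x} := by
    ext b
    simp only [hG', rewire, mem_neighborSet, sup_adj, deleteEdges_adj, fromEdgeSet_adj,
      Set.mem_singleton_iff, Sym2.eq_iff, Set.mem_diff]
    tauto
  have hNy : G'.neighborSet y = insert x (G.neighborSet y) := by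
    ext b
    simp only [hG', rewire, mem_neighborSet, sup_adj, deleteEdges_adj, fromEdgeSet_adj,
      Set.mem_singleton_iff, Sym2.eq_iff, Set.mem_insert_iff]
    constructor
    · tauto
    · rintro (rfl | h)
      · tauto
      · exact Or.inl ⟨h, by tauto⟩
  have hNx : G'.neighborSet x = insert y (G.neighborSet x \ {v}) := by
    ext b
    simp only [hG', rewire, mem_neighborSet, sup_adj, deleteEdges_adj, fromEdgeSet_adj,
      Set.mem_singleton_iff, Sym2.eq_iff, Set.mem_insert_iff, Set.mem_diff]
    constructor
    · tauto
    · rintro (rfl | ⟨h, hb⟩)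
      · tauto
      · exact Or.inl ⟨h, by tauto⟩
  have hNo : ∀ u, u ≠ x → u ≠ v → u ≠ y → G'.neighborSet u = G.neighborSet u := by
    intro u hux huv huy
    ext b
    simp only [hG', rewire, mem_neighborSet, sup_adj, deleteEdges_adj, fromEdgeSet_adj,
      Set.mem_singleton_iff, Sym2.eq_iff]
    tauto
  -- ncards
  have hxmem : x ∈ G.neighborSet v := hadj.symm
  have hvmem : v ∈ G.neighborSet x := hadj
  have hcv : (G'.neighborSet v).ncard = d - 1 := by
    rw [hNv, Set.ncard_diff_singleton_of_mem hxmem, hreg]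
  have hcy : (G'.neighborSet y).ncard = d + 1 := by
    have hx : x ∉ G.neighborSet y := fun h => hnadj (SimpleGraph.Adj.symm h)
    rw [hNy, Set.ncard_insert_of_notMem hx (Set.toFinite _), hreg]
  have hcx : (G'.neighborSet x).ncard = d := by
    have hy : y ∉ G.neighborSet x \ {v} := fun h => hnadj h.1
    rw [hNx, Set.ncard_insert_of_notMem hy (Set.toFinite _),
      Set.ncard_diff_singleton_of_mem hvmem, hreg]
    omega
  have hco : ∀ u, u ≠ v → u ≠ y → (G'.neighborSet u).ncard = d := by
    intro u huv huy
    by_cases hux : u = x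
    · exact hux ▸ hcx
    · rw [hNo u hux huv huy, hreg]
  -- sums
  have key : ∀ (H : SimpleGraph V),
      wedgeCount H = (∑ u ∈ ({v, y} : Finset V), ((H.neighborSet u).ncard).choose 2)
        + ∑ u ∈ ({v, y} : Finset V)ᶜ, ((H.neighborSet u).ncard).choose 2 := by
    intro H
    rw [Finset.sum_add_sum_compl]
    rfl
  rw [key G', key G, Finset.sum_pair hvy, Finset.sum_pair hvy, hcv, hcy, hreg, hreg]
  have hcompl : ∀ u ∈ ({v, y} : Finset V)ᶜ,
      ((G'.neighborSet u).ncard).choose 2 = ((G.neighborSet u).ncard).choose 2 := by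
    intro u hu
    simp only [Finset.mem_compl, Finset.mem_insert, Finset.mem_singleton, not_or] at hu
    rw [hco u hu.1 hu.2, hreg]
  rw [Finset.sum_congr rfl hcompl]
  have harith : (d - 1).choose 2 + (d + 1).choose 2 = d.choose 2 + d.choose 2 + 1 := by
    rcases d with _ | n
    · omega
    · have h1 : (n + 1 + 1).choose 2 = (n + 1).choose 1 + (n + 1).choose 2 :=
        by rw [Nat.choose_succ_succ]
      have h2 : (n + 1).choose 2 = n.choose 1 + n.choose 2 := by rw [Nat.choose_succ_succ]
      simp only [Nat.choose_one_right] at h1 h2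
      simp only [Nat.add_sub_cancel]
      omega
  omega
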